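/- For any partition λ = (λ₁, ..., λ_r) and any move on an odd-numbered row of λ producing λ̄, we have core(λ̄) = core(λ). -/

import Mathlib

/-- The `j`-th part (0-indexed) of a partition given as a list, `0` beyond the end. -/
def part (l : List ℕ) (j : ℕ) : ℕ := l.getD j 0

/-- A partition: a nonincreasing list of positive integers. -/
def IsPartition (l : List ℕ) : Prop :=
  l.Chain' (· ≥ ·) ∧ ∀ x ∈ l, 0 < x

/-- RIT move: replace the part at (0-indexed) position `i` by a smaller value `v`,
keeping the sequence nonincreasing, then drop the (trailing) zeros. -/
def RitMove (l l' : List ℕ) : Prop :=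
  ∃ i v, i < l.length ∧ v < part l i ∧ (l.set i v).Chain' (· ≥ ·) ∧
    l' = (l.set i v).filter (fun x => x ≠ 0)

/-- RIT move on an odd-numbered row (1-indexed), i.e. an even 0-indexed position. -/
def RitMoveOdd (l l' : List ℕ) : Prop :=
  ∃ i v, i < l.length ∧ i % 2 = 0 ∧ v < part l i ∧ (l.set i v).Chain' (· ≥ ·) ∧
    l' = (l.set i v).filter (fun x => x ≠ 0)

/-- RIT move on an even-numbered row (1-indexed), i.e. an odd 0-indexed position. -/
def RitMoveEven (l l' : List ℕ) : Prop :=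
  ∃ i v, i < l.length ∧ i % 2 = 1 ∧ v < part l i ∧ (l.set i v).Chain' (· ≥ ·) ∧
    l' = (l.set i v).filter (fun x => x ≠ 0)

/-- `core λ = (λ₂, λ₂, λ₄, λ₄, …)` (1-indexed parts), as a `0`-padded sequence. -/
def core (l : List ℕ) : ℕ → ℕ := fun j => part l (2 * (j / 2) + 1)

/-- `rem λ = (λ₁ - λ₂, λ₃ - λ₄, …)` (1-indexed parts), as a `0`-padded sequence. -/
def rem (l : List ℕ) : ℕ → ℕ := fun i => part l (2 * i) - part l (2 * i + 1)

/-- A Nim move strictly decreases exactly one coordinate. -/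
def NimMove (p q : ℕ → ℕ) : Prop := ∃ i, q i < p i ∧ ∀ j, j ≠ i → q j = p j

/-- The nim-sum (bitwise XOR) of the remnant of `l`:
`(λ₁ - λ₂) ⊕ (λ₃ - λ₄) ⊕ ⋯ ⊕ (λ_{2⌈r/2⌉-1} - λ_{2⌈r/2⌉})`. -/
def nimSum (l : List ℕ) : ℕ :=
  (List.ofFn (fun i : Fin ((l.length + 1) / 2) => rem l i)).foldr (· ^^^ ·) 0

/-- The minimal excludant of a set of naturals. -/
noncomputable def mexOf (S : Set ℕ) : ℕ := sInf {n | n ∉ S}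

/-- `G` is the (normal play) Sprague-Grundy function of RIT. -/
def IsRitGrundy (G : List ℕ → ℕ) : Prop :=
  ∀ l, IsPartition l → G l = mexOf {n | ∃ l', RitMove l l' ∧ G l' = n}

/-- `G` is the misère Grundy function of RIT (value `1` at the terminal position). -/
def IsRitMisereGrundy (G : List ℕ → ℕ) : Prop :=
  G [] = 1 ∧ ∀ l, IsPartition l → l ≠ [] →
    G l = mexOf {n | ∃ l', RitMove l l' ∧ G l' = n}

/-- `G` is the misère Grundy function of Nim on `0`-padded sequences of heaps. -/
def IsNimMisereGrundy (G : (ℕ → ℕ) → ℕ) : Prop :=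
  (∀ p : ℕ → ℕ, (∀ i, p i = 0) → G p = 1) ∧
  (∀ p : ℕ → ℕ, (Function.support p).Finite → (∃ i, p i ≠ 0) →
    G p = mexOf {n | ∃ q, NimMove p q ∧ G q = n})

/-- `P` is the set of P-positions of RIT under normal play. -/
def IsRitP (P : List ℕ → Prop) : Prop :=
  ∀ l, IsPartition l → (P l ↔ ∀ l', RitMove l l' → ¬ P l')

/-- a move on an odd-numbered row preserves the core. -/
theorem stmt_0 (l l' : List ℕ) (hl : IsPartition l) (h : RitMoveOdd l l') :
    core l' = core l := by
  obtain ⟨i, v, hi, hieven, hv, hchain, hl'⟩ := h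
  subst hl'
  rcases Nat.eq_zero_or_pos v with hv0 | hvpos
  · -- v = 0 : i must be the last index
    subst hv0
    have hlast : i + 1 = l.length := by
      by_contra hne
      have h1 : i + 1 < l.length := by omega
      have := List.isChain_iff_getElem.mp hchain i (by simp; omega)
      rw [List.getElem_set_self (by simpa using hi), List.getElem_set_ne (by omega)] at this
      have := hl.2 (l[i + 1]) (List.getElem_mem _)
      omega
    have hset : l.set i 0 = l.take i ++ [0] := by
      rw [List.set_eq_take_cons_drop _ (by omega)]
      have : l.drop (i + 1) = [] := by
        apply List.drop_eq_nil_of_le; omega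
      rw [this]
    rw [hset, List.filter_append]
    have htake : (l.take i).filter (fun x => x ≠ 0) = l.take i := by
      apply List.filter_eq_self.mpr
      intro x hx
      have := hl.2 x (List.mem_of_mem_take hx)
      simpa using this.ne'
    rw [htake]
    simp only [List.filter_cons, List.filter_nil]
    norm_num
    funext j
    unfold core part
    set k := 2 * (j / 2) + 1 with hk
    rcases lt_or_ge k i with hki | hki
    · rw [List.getD_eq_getElem?_getD, List.getD_eq_getElem?_getD,
        List.getElem?_take_of_lt hki]
    · have hk2 : k ≠ i := by omega
      have hkge : l.length ≤ k := by omega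
      rw [List.getD_eq_default _ _ (by simp; omega), List.getD_eq_default _ _ hkge]
  · -- v > 0 : filter is identity
    have hfil : (l.set i v).filter (fun x => x ≠ 0) = l.set i v := by
      apply List.filter_eq_self.mpr
      intro x hx
      rcases List.mem_or_eq_of_mem_set hx with h1 | h2
      · simpa using (hl.2 x h1).ne'
      · simp [h2]; omega
    rw [hfil]
    funext j
    unfold core part
    rw [List.getD_eq_getElem?_getD, List.getD_eq_getElem?_getD,
      List.getElem?_set_ne (by omega)]
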